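/- Let P : ℝ → ℝ be C¹ with P' > 0 on [ρ*, ρ*'] (0 < ρ* < ρ*'), P(ρ̄) = 0 for some ρ̄ ∈ (ρ*, ρ*'), and e(ρ) = ρ ∫_{ρ̄}^{ρ} P(t)/t² dt. Then e is strictly convex on [ρ*, ρ*'], and there exist constants 0 < m* ≤ m** such that m*(ρ − ρ̄)² ≤ e(ρ) ≤ m**(ρ − ρ̄)² for all ρ ∈ [ρ*, ρ*']. -/

import Mathlib

open Set MeasureTheory

set_option maxHeartbeats 1000000

private theorem quad1 (a b c : ℝ) : (∫ t in a..b, c * (t - a)) = c * (b - a) ^ 2 / 2 := by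
  rw [intervalIntegral.integral_const_mul, intervalIntegral.integral_comp_sub_right (fun t => t) a]
  rw [integral_id]; ring

private theorem quad2 (a b c : ℝ) : (∫ t in a..b, c * (b - t)) = c * (b - a) ^ 2 / 2 := by
  have h : ∀ t : ℝ, c * (b - t) = c * b - c * t := fun t => by ring
  simp only [h]
  rw [intervalIntegral.integral_sub intervalIntegrable_const
    ((by fun_prop : Continuous fun t : ℝ => c * t).intervalIntegrable a b)]
  rw [intervalIntegral.integral_const, intervalIntegral.integral_const_mul, integral_id]
  simp; ring

/-- Strict convexity of the potential energy `e` and the quadratic bounds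
`m*(ρ-ρ̄)² ≤ e(ρ) ≤ m**(ρ-ρ̄)²` on the interval `[ρ*, ρ*']`. -/
theorem stmt1 (ρs ρs' ρbar : ℝ) (P e : ℝ → ℝ)
    (h0 : 0 < ρs) (h1 : ρs < ρs')
    (hP : ContDiffOn ℝ 1 P (Set.Icc ρs ρs'))
    (hP' : ∀ x ∈ Set.Icc ρs ρs', 0 < deriv P x)
    (hbar : ρbar ∈ Set.Ioo ρs ρs') (hPbar : P ρbar = 0)
    (he : ∀ ρ, e ρ = ρ * ∫ t in ρbar..ρ, P t / t ^ 2) :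
    StrictConvexOn ℝ (Set.Icc ρs ρs') e ∧
      ∃ m₁ m₂ : ℝ, 0 < m₁ ∧ m₁ ≤ m₂ ∧
        ∀ ρ ∈ Set.Icc ρs ρs',
          m₁ * (ρ - ρbar) ^ 2 ≤ e ρ ∧ e ρ ≤ m₂ * (ρ - ρbar) ^ 2 := by
  have hbar' : ρbar ∈ Icc ρs ρs' := Ioo_subset_Icc_self hbar
  have hρbar0 : 0 < ρbar := lt_trans h0 hbar.1
  have hPdiff : ∀ x ∈ Icc ρs ρs', DifferentiableAt ℝ P x := by
    intro x hx
    by_contra h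
    have := deriv_zero_of_not_differentiableAt h
    exact absurd this (ne_of_gt (hP' x hx))
  have hpos : ∀ t ∈ Icc ρs ρs', 0 < t := fun t ht => lt_of_lt_of_le h0 ht.1
  set f : ℝ → ℝ := fun t => P t / t ^ 2 with hf
  have hfc : ContinuousOn f (Icc ρs ρs') := by
    apply ContinuousOn.div hP.continuousOn (continuous_pow 2).continuousOn
    intro t ht
    exact pow_ne_zero 2 (ne_of_gt (hpos t ht))
  have hfca : ∀ t ∈ Icc ρs ρs', ContinuousAt f t := by
    intro t ht
    exact ((hPdiff t ht).continuousAt).div (continuousAt_pow t 2)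
      (pow_ne_zero 2 (ne_of_gt (hpos t ht)))
  have hfint : ∀ a ∈ Icc ρs ρs', ∀ b ∈ Icc ρs ρs', IntervalIntegrable f volume a b := by
    intro a ha b hb
    exact (hfc.mono (uIcc_subset_Icc ha hb)).intervalIntegrable
  set F : ℝ → ℝ := fun x => ∫ t in ρbar..x, f t with hF
  have heF : e = fun x => x * F x := by
    funext x; exact he x
  have hdc : ContinuousOn (deriv P) (Icc ρs ρs') := by
    have h2 : ContinuousOn (derivWithin P (Icc ρs ρs')) (Icc ρs ρs') :=
      hP.continuousOn_derivWithin (uniqueDiffOn_Icc h1) le_rfl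
    apply h2.congr
    intro x hx
    exact ((hPdiff x hx).derivWithin ((uniqueDiffOn_Icc h1) x hx)).symm
  obtain ⟨x₁, hx₁, hmin⟩ := isCompact_Icc.exists_isMinOn (nonempty_Icc.2 h1.le) hdc
  obtain ⟨x₂, hx₂, hmax⟩ := isCompact_Icc.exists_isMaxOn (nonempty_Icc.2 h1.le) hdc
  set c₁ := deriv P x₁ with hc₁
  set c₂ := deriv P x₂ with hc₂
  have hc₁pos : 0 < c₁ := hP' x₁ hx₁
  have hc₁₂ : c₁ ≤ c₂ := hmin hx₂
  have hρs'pos : (0:ℝ) < ρs' := lt_trans h0 h1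
  -- Mean value bounds
  have hmvt : ∀ a ∈ Icc ρs ρs', ∀ b ∈ Icc ρs ρs', a ≤ b →
      c₁ * (b - a) ≤ P b - P a ∧ P b - P a ≤ c₂ * (b - a) := by
    intro a ha b hb hab
    rcases eq_or_lt_of_le hab with rfl | hab
    · constructor <;> nlinarith
    · have hsub : Icc a b ⊆ Icc ρs ρs' := Icc_subset_Icc ha.1 hb.2
      have hcont : ContinuousOn P (Icc a b) := fun x hx =>
        ((hPdiff x (hsub hx)).continuousAt).continuousWithinAt
      obtain ⟨c, hc, hceq⟩ := exists_hasDerivAt_eq_slope P (deriv P) hab hcont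
        (fun x hx => (hPdiff x (hsub (Ioo_subset_Icc_self hx))).hasDerivAt)
      have hcmem : c ∈ Icc ρs ρs' := hsub (Ioo_subset_Icc_self hc)
      have h1' : c₁ ≤ deriv P c := hmin hcmem
      have h2' : deriv P c ≤ c₂ := hmax hcmem
      have hne : b - a ≠ 0 := sub_ne_zero.2 hab.ne'
      have hb' : P b - P a = deriv P c * (b - a) := (div_eq_iff hne).1 hceq.symm
      constructor <;> nlinarith [sub_pos.2 hab]
  -- linear bounds for P on the right of ρbar
  have hPub : ∀ t ∈ Icc ρs ρs', ρbar ≤ t → c₁ * (t - ρbar) ≤ P t ∧ P t ≤ c₂ * (t - ρbar) := by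
    intro t ht h
    obtain ⟨hl, hu⟩ := hmvt ρbar hbar' t ht h
    rw [hPbar] at hl hu
    constructor <;> linarith
  -- linear bounds for P on the left of ρbar
  have hPlb : ∀ t ∈ Icc ρs ρs', t ≤ ρbar → c₂ * (t - ρbar) ≤ P t ∧ P t ≤ c₁ * (t - ρbar) := by
    intro t ht h
    obtain ⟨hl, hu⟩ := hmvt t ht ρbar hbar' h
    rw [hPbar] at hl hu
    constructor <;> linarith
  -- Integral bounds
  have hIbound : ∀ ρ ∈ Icc ρs ρs',
      c₁ / ρs' ^ 2 * (ρ - ρbar) ^ 2 / 2 ≤ F ρ ∧ F ρ ≤ c₂ / ρs ^ 2 * (ρ - ρbar) ^ 2 / 2 := by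
    intro ρ hρ
    rcases le_total ρbar ρ with h | h
    · have hsub : Icc ρbar ρ ⊆ Icc ρs ρs' := Icc_subset_Icc hbar'.1 hρ.2
      have hlow : ∀ t ∈ Icc ρbar ρ, c₁ / ρs' ^ 2 * (t - ρbar) ≤ f t := by
        intro t ht
        have htm := hsub ht
        have h2 : c₁ * (t - ρbar) ≤ P t := (hPub t htm ht.1).1
        have ht0 : 0 < t := hpos t htm
        have ht2 : t ^ 2 ≤ ρs' ^ 2 := by nlinarith [htm.2]
        rw [hf, div_mul_eq_mul_div, div_le_div_iff₀ (by positivity) (by positivity)]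
        nlinarith [ht.1, mul_le_mul_of_nonneg_right h2 (le_of_lt (pow_pos hρs'pos 2)),
          mul_nonneg (mul_nonneg hc₁pos.le (sub_nonneg.2 ht.1)) (sub_nonneg.2 ht2)]
      have hup : ∀ t ∈ Icc ρbar ρ, f t ≤ c₂ / ρs ^ 2 * (t - ρbar) := by
        intro t ht
        have htm := hsub ht
        have h2 : P t ≤ c₂ * (t - ρbar) := (hPub t htm ht.1).2
        have ht0 : 0 < t := hpos t htm
        have ht2 : ρs ^ 2 ≤ t ^ 2 := by nlinarith [htm.1]
        rw [hf, div_mul_eq_mul_div, div_le_div_iff₀ (by positivity) (by positivity)]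
        nlinarith [ht.1, mul_le_mul_of_nonneg_right h2 (le_of_lt (pow_pos h0 2)),
          mul_nonneg (mul_nonneg (le_trans hc₁pos.le hc₁₂) (sub_nonneg.2 ht.1)) (sub_nonneg.2 ht2)]
      have hcl : Continuous fun t : ℝ => c₁ / ρs' ^ 2 * (t - ρbar) := by fun_prop
      have hcu : Continuous fun t : ℝ => c₂ / ρs ^ 2 * (t - ρbar) := by fun_prop
      constructor
      · calc c₁ / ρs' ^ 2 * (ρ - ρbar) ^ 2 / 2 = ∫ t in ρbar..ρ, c₁ / ρs' ^ 2 * (t - ρbar) :=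
              (quad1 _ _ _).symm
          _ ≤ F ρ := intervalIntegral.integral_mono_on h (hcl.intervalIntegrable _ _)
              (hfint ρbar hbar' ρ hρ) hlow
      · calc F ρ ≤ ∫ t in ρbar..ρ, c₂ / ρs ^ 2 * (t - ρbar) :=
              intervalIntegral.integral_mono_on h (hfint ρbar hbar' ρ hρ)
                (hcu.intervalIntegrable _ _) hup
          _ = c₂ / ρs ^ 2 * (ρ - ρbar) ^ 2 / 2 := quad1 _ _ _
    · have hsub : Icc ρ ρbar ⊆ Icc ρs ρs' := Icc_subset_Icc hρ.1 hbar'.2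
      have hFsym : F ρ = -∫ t in ρ..ρbar, f t := by
        rw [hF]; exact intervalIntegral.integral_symm ρ ρbar
      have hup : ∀ t ∈ Icc ρ ρbar, f t ≤ -(c₁ / ρs' ^ 2) * (ρbar - t) := by
        intro t ht
        have htm := hsub ht
        have key : P t ≤ c₁ * (t - ρbar) := (hPlb t htm ht.2).2
        have ht0 : 0 < t := hpos t htm
        have ht2 : t ^ 2 ≤ ρs' ^ 2 := by nlinarith [htm.2]
        have heq : -(c₁ / ρs' ^ 2) * (ρbar - t) = c₁ * (t - ρbar) / ρs' ^ 2 := by ring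
        rw [heq, hf, div_le_div_iff₀ (by positivity) (by positivity)]
        nlinarith [ht.2, mul_le_mul_of_nonneg_right key (le_of_lt (pow_pos hρs'pos 2)),
          mul_nonneg (mul_nonneg hc₁pos.le (sub_nonneg.2 ht.2)) (sub_nonneg.2 ht2)]
      have hlow : ∀ t ∈ Icc ρ ρbar, -(c₂ / ρs ^ 2) * (ρbar - t) ≤ f t := by
        intro t ht
        have htm := hsub ht
        have key : c₂ * (t - ρbar) ≤ P t := (hPlb t htm ht.2).1
        have hPt0 : P t ≤ c₁ * (t - ρbar) := (hPlb t htm ht.2).2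
        have hPt0' : P t ≤ 0 := by nlinarith [ht.2]
        have ht0 : 0 < t := hpos t htm
        have ht2 : ρs ^ 2 ≤ t ^ 2 := by nlinarith [htm.1]
        have heq : -(c₂ / ρs ^ 2) * (ρbar - t) = c₂ * (t - ρbar) / ρs ^ 2 := by ring
        rw [heq, hf, div_le_div_iff₀ (by positivity) (by positivity)]
        nlinarith [ht.2, mul_le_mul_of_nonneg_right key (le_of_lt (pow_pos ht0 2)),
          mul_nonneg (neg_nonneg.2 hPt0') (sub_nonneg.2 ht2)]
      have hcl : Continuous fun t : ℝ => -(c₂ / ρs ^ 2) * (ρbar - t) := by fun_prop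
      have hcu : Continuous fun t : ℝ => -(c₁ / ρs' ^ 2) * (ρbar - t) := by fun_prop
      have hJu : (∫ t in ρ..ρbar, f t) ≤ -(c₁ / ρs' ^ 2) * (ρbar - ρ) ^ 2 / 2 := by
        calc (∫ t in ρ..ρbar, f t) ≤ ∫ t in ρ..ρbar, -(c₁ / ρs' ^ 2) * (ρbar - t) :=
              intervalIntegral.integral_mono_on h (hfint ρ hρ ρbar hbar')
                (hcu.intervalIntegrable _ _) hup
          _ = -(c₁ / ρs' ^ 2) * (ρbar - ρ) ^ 2 / 2 := quad2 _ _ _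
      have hJl : -(c₂ / ρs ^ 2) * (ρbar - ρ) ^ 2 / 2 ≤ ∫ t in ρ..ρbar, f t := by
        calc -(c₂ / ρs ^ 2) * (ρbar - ρ) ^ 2 / 2
            = ∫ t in ρ..ρbar, -(c₂ / ρs ^ 2) * (ρbar - t) := (quad2 _ _ _).symm
          _ ≤ ∫ t in ρ..ρbar, f t := intervalIntegral.integral_mono_on h
              (hcl.intervalIntegrable _ _) (hfint ρ hρ ρbar hbar') hlow
      rw [hFsym]
      have hsq : (ρbar - ρ) ^ 2 = (ρ - ρbar) ^ 2 := by ring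
      rw [hsq] at hJu hJl
      constructor <;> linarith
  have hFcont : ContinuousOn F (Icc ρs ρs') := by
    have h2 : ContinuousOn F (uIcc ρs ρs') := by
      apply intervalIntegral.continuousOn_primitive_interval'
      · exact hfint ρs (left_mem_Icc.2 h1.le) ρs' (right_mem_Icc.2 h1.le)
      · rw [uIcc_of_le h1.le]; exact hbar'
    rwa [uIcc_of_le h1.le] at h2
  constructor
  · -- strict convexity
    apply strictConvexOn_of_deriv2_pos (convex_Icc _ _)
    · rw [heF]
      exact continuousOn_id.mul hFcont
    · intro ρ hρ
      rw [interior_Icc] at hρ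
      have hmemnhds : Ioo ρs ρs' ∈ nhds ρ := isOpen_Ioo.mem_nhds hρ
      have hmeas : AEStronglyMeasurable f (volume.restrict (Ioo ρs ρs')) :=
        (hfc.mono Ioo_subset_Icc_self).aestronglyMeasurable measurableSet_Ioo
      have hFd : ∀ x ∈ Ioo ρs ρs', HasDerivAt F (f x) x := by
        intro x hx
        apply intervalIntegral.integral_hasDerivAt_right
          (hfint ρbar hbar' x (Ioo_subset_Icc_self hx))
        · exact ⟨Ioo ρs ρs', isOpen_Ioo.mem_nhds hx, hmeas⟩
        · exact hfca x (Ioo_subset_Icc_self hx)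
      have hed : ∀ x ∈ Ioo ρs ρs', HasDerivAt e (F x + P x / x) x := by
        intro x hx
        have hx0 : (0:ℝ) < x := hpos x (Ioo_subset_Icc_self hx)
        have hmul := (hasDerivAt_id x).mul (hFd x hx)
        rw [heF]
        refine hmul.congr_deriv ?_
        rw [hf, id]
        field_simp
      have hde : deriv e =ᶠ[nhds ρ] fun x => F x + P x / x :=
        Filter.eventually_of_mem hmemnhds (fun x hx => (hed x hx).deriv)
      have hρ0 : (0:ℝ) < ρ := hpos ρ (Ioo_subset_Icc_self hρ)
      have hd2 : HasDerivAt (fun x => F x + P x / x)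
          (f ρ + (deriv P ρ * ρ - P ρ * 1) / ρ ^ 2) ρ :=
        (hFd ρ hρ).add
          (((hPdiff ρ (Ioo_subset_Icc_self hρ)).hasDerivAt).div (hasDerivAt_id ρ) hρ0.ne')
      have hkey : deriv (deriv e) ρ = f ρ + (deriv P ρ * ρ - P ρ * 1) / ρ ^ 2 := by
        rw [hde.deriv_eq]
        exact hd2.deriv
      simp only [Function.iterate_succ, Function.iterate_zero, Function.comp_apply, id_eq]
      rw [hkey]
      have hval : f ρ + (deriv P ρ * ρ - P ρ * 1) / ρ ^ 2 = deriv P ρ / ρ := by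
        rw [hf]
        field_simp
        ring
      rw [hval]
      exact div_pos (hP' ρ (Ioo_subset_Icc_self hρ)) hρ0
  · -- quadratic bounds
    refine ⟨ρs * (c₁ / ρs' ^ 2) / 2, ρs' * (c₂ / ρs ^ 2) / 2,
      by apply div_pos (mul_pos h0 (div_pos hc₁pos (by positivity))) two_pos, ?_, ?_⟩
    · have e1 : c₁ / ρs' ^ 2 ≤ c₂ / ρs ^ 2 := by
        rw [div_le_div_iff₀ (by positivity) (by positivity)]
        nlinarith [mul_le_mul_of_nonneg_right hc₁₂ (sq_nonneg ρs),
          mul_le_mul_of_nonneg_left (pow_le_pow_left₀ h0.le h1.le 2)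
            (le_trans hc₁pos.le hc₁₂)]
      have e2 : 0 ≤ c₁ / ρs' ^ 2 := le_of_lt (div_pos hc₁pos (by positivity))
      nlinarith [mul_le_mul h1.le e1 e2 hρs'pos.le]
    · intro ρ hρ
      obtain ⟨hl, hu⟩ := hIbound ρ hρ
      have hρpos : 0 < ρ := hpos ρ hρ
      have hlow0 : 0 ≤ c₁ / ρs' ^ 2 * (ρ - ρbar) ^ 2 / 2 := by
        have := div_pos hc₁pos (pow_pos hρs'pos 2)
        positivity
      have hF0 : 0 ≤ F ρ := le_trans hlow0 hl
      rw [he ρ]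
      constructor
      · calc ρs * (c₁ / ρs' ^ 2) / 2 * (ρ - ρbar) ^ 2
            = ρs * (c₁ / ρs' ^ 2 * (ρ - ρbar) ^ 2 / 2) := by ring
          _ ≤ ρ * (c₁ / ρs' ^ 2 * (ρ - ρbar) ^ 2 / 2) :=
              mul_le_mul_of_nonneg_right hρ.1 hlow0
          _ ≤ ρ * F ρ := mul_le_mul_of_nonneg_left hl (le_of_lt hρpos)
      · calc ρ * F ρ ≤ ρs' * F ρ := mul_le_mul_of_nonneg_right hρ.2 hF0
          _ ≤ ρs' * (c₂ / ρs ^ 2 * (ρ - ρbar) ^ 2 / 2) :=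
              mul_le_mul_of_nonneg_left hu (by linarith)
          _ = ρs' * (c₂ / ρs ^ 2) / 2 * (ρ - ρbar) ^ 2 := by ring
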